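/- Let z : ℝ → ℂ be twice differentiable and m : ℝ → ℝ differentiable, and define f := (1/2)·(|z|²)′ − i·Im(conj(z)·z′), g := i·(z″ − m·z), h := −|z|². Then the nonstretching conditions hold: h′ = −2·Re(f) and (Im f)′ = Re(g·conj(z)). (These are the conditions for the vector field X₄ = f·Γ + g·B + h·V of the Yajima–Oikawa hierarchy to preserve the adapted natural frame along a transverse curve with complex curvature z and real invariant m.) -/

import Mathlib

open Complex

noncomputable section

/-- The coefficients of the fourth vector field `X₄` of the Yajima–Oikawa hierarchy
satisfy the nonstretching conditions. -/
theorem X4_nonstretching (z : ℝ → ℂ) (m : ℝ → ℝ)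
    (hz : Differentiable ℝ z) (hz2 : Differentiable ℝ (deriv z))
    (hm : Differentiable ℝ m)
    (f : ℝ → ℂ) (g : ℝ → ℂ) (h : ℝ → ℝ)
    (hf : f = fun x => (1/2 : ℂ) * ((deriv (fun y => ‖z y‖ ^ 2) x : ℝ) : ℂ)
      - Complex.I * ((((starRingEnd ℂ) (z x) * deriv z x).im : ℝ) : ℂ))
    (hg : g = fun x => Complex.I * (deriv (deriv z) x - (m x : ℂ) * z x))
    (hh : h = fun x => -‖z x‖ ^ 2) :
    (∀ x : ℝ, deriv h x = -2 * (f x).re) ∧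
    (∀ x : ℝ, deriv (fun y => (f y).im) x = (g x * (starRingEnd ℂ) (z x)).re) := by
  subst hf hg hh
  have key : ∀ x : ℝ, HasDerivAt (fun y => ‖z y‖ ^ 2)
      (((starRingEnd ℂ) (deriv z x) * z x + (starRingEnd ℂ) (z x) * deriv z x).re) x := by
    intro x
    have h1 : HasDerivAt (fun y => (starRingEnd ℂ) (z y)) ((starRingEnd ℂ) (deriv z x)) x :=
      Complex.conjCLE.hasFDerivAt.comp_hasDerivAt x (hz x).hasDerivAt
    have h2 := h1.mul (hz x).hasDerivAt
    have h3 := Complex.reCLM.hasFDerivAt.comp_hasDerivAt x h2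
    have heq : (fun y => ‖z y‖ ^ 2)
        = fun y => Complex.reCLM ((starRingEnd ℂ) (z y) * z y) := by
      funext y
      simp [Complex.mul_re, Complex.sq_norm, Complex.normSq_apply]
    rw [heq]
    exact h3
  constructor
  · intro x
    rw [((key x).fun_neg).deriv]
    simp only [(key x).deriv]
    simp [Complex.mul_re, Complex.mul_im, Complex.sub_re]
  · intro x
    have him : (fun y => ((fun x => (1/2 : ℂ) * ((deriv (fun y => ‖z y‖ ^ 2) x : ℝ) : ℂ)
        - Complex.I * ((((starRingEnd ℂ) (z x) * deriv z x).im : ℝ) : ℂ)) y).im)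
        = fun y => -Complex.imCLM ((starRingEnd ℂ) (z y) * deriv z y) := by
      funext y
      simp
    rw [him]
    have h1 : HasDerivAt (fun y => (starRingEnd ℂ) (z y)) ((starRingEnd ℂ) (deriv z x)) x :=
      Complex.conjCLE.hasFDerivAt.comp_hasDerivAt x (hz x).hasDerivAt
    have h2 := h1.mul (hz2 x).hasDerivAt
    have h3 := (Complex.imCLM.hasFDerivAt.comp_hasDerivAt x h2).fun_neg
    have h4 : HasDerivAt (fun y => -Complex.imCLM ((starRingEnd ℂ) (z y) * deriv z y))
        (-Complex.imCLM ((starRingEnd ℂ) (deriv z x) * deriv z x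
          + (starRingEnd ℂ) (z x) * deriv (deriv z) x)) x := by
      simpa [Function.comp_def, Pi.neg_apply, Pi.mul_apply] using h3
    rw [h4.deriv]
    simp [Complex.mul_re, Complex.mul_im, Complex.sub_re, Complex.sub_im]
    ring

end
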